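/- Let p be an odd prime, q = p^n, d = p^s with 2n/s an odd integer ≥ 3. Fix μ ∈ F_{q^2} \ F_q with μ^d = u1 + u2 μ and μ^{d+1} = w1 + w2 μ (u1,u2,w1,w2 ∈ F_q), where u2 is a (d-1)-th power in F_{q^2}^*. Let X = {((a + βμ)^d + (a + βμ), t1 + (a^d β + a β^d u2 + β^{d+1} w2)μ) : a, β, t1 ∈ F_q} ⊆ V(A_{q^2,d}). Then every vertex of X has at most 2q - 1 neighbors within X; i.e., the induced subgraph A_{q^2,d}[X] has maximum degree less than 2q. -/

import Mathlib

/-- With `μ ∈ F_{q^2} \ F_q`, `μ^d = u1 + u2 μ`, `μ^{d+1} = w1 + w2 μ`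
(`u1, u2, w1, w2 ∈ F_q`, `u2` a `(d-1)`-th power in `F_{q^2}^*`), every vertex of the set
`X = {((a + βμ)^d + (a + βμ), t1 + (a^d β + a β^d u2 + β^{d+1} w2)μ) : a, β, t1 ∈ F_q}`
has at most `2q - 1` neighbors within `X` in the graph `A_{q^2,d}`. -/
theorem stmt_16 {p s n r : ℕ} (hp : p.Prime) (hpodd : Odd p) (hs : 0 < s) (hn : 0 < n)
    (hr : s * r = 2 * n) (hrodd : Odd r) (hr3 : 3 ≤ r)
    {F : Type*} [Field F] [Fintype F] (q d : ℕ) (hq : q = p ^ n) (hd : d = p ^ s)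
    (hF : Fintype.card F = q ^ 2)
    (μ u1 u2 w1 w2 : F) (hμ : μ ^ q ≠ μ)
    (hu1 : u1 ^ q = u1) (hu2 : u2 ^ q = u2) (hw1 : w1 ^ q = w1) (hw2 : w2 ^ q = w2)
    (hμd : μ ^ d = u1 + u2 * μ) (hμd1 : μ ^ (d + 1) = w1 + w2 * μ)
    (hu2pow : ∃ w : F, w ≠ 0 ∧ w ^ (d - 1) = u2)
    (A : SimpleGraph (F × F))
    (hA : A = SimpleGraph.fromRel (fun u v => ∃ a b : F,
      a ^ d + a = u.1 ∧ b ^ d + b = v.1 ∧ a ^ d * b + a * b ^ d = u.2 + v.2))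
    (X : Set (F × F))
    (hX : X = {v | ∃ a β t1 : F, a ^ q = a ∧ β ^ q = β ∧ t1 ^ q = t1 ∧
      v = ((a + β * μ) ^ d + (a + β * μ),
        t1 + (a ^ d * β + a * β ^ d * u2 + β ^ (d + 1) * w2) * μ)}) :
    ∀ v ∈ X, {w ∈ X | A.Adj v w}.ncard ≤ 2 * q - 1 := by
  classical
  -- keep hA, hX as equations
  haveI : Fact p.Prime := ⟨hp⟩
  have hp3 : 3 ≤ p := by
    have h2 := hp.two_le
    rcases hpodd with ⟨k, hk⟩
    omega
  have hq3 : 3 ≤ q := by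
    subst hq
    calc 3 ≤ p := hp3
    _ ≤ p ^ n := Nat.le_self_pow hn.ne' p
  have hd3 : 3 ≤ d := by
    subst hd
    calc 3 ≤ p := hp3
    _ ≤ p ^ s := Nat.le_self_pow hs.ne' p
  have hdodd : Odd d := hd ▸ hpodd.pow
  have hqodd : Odd q := hq ▸ hpodd.pow
  -- characteristic
  haveI hcharF : CharP F p := by
    haveI := ringChar.charP F
    obtain ⟨m, hc, hcard⟩ := FiniteField.card F (ringChar F)
    have hdvd : ringChar F ∣ p ^ (2 * n) := by
      have : Fintype.card F = p ^ (2 * n) := by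
        rw [hF, hq, ← pow_mul, mul_comm]
      rw [← this, hcard]
      exact dvd_pow_self _ (by positivity)
    have : ringChar F = p :=
      (Nat.prime_dvd_prime_iff_eq hc hp).mp (hc.dvd_of_dvd_pow hdvd)
    exact this ▸ ringChar.charP F
  -- Frobenius facts
  have frobd : ∀ x y : F, (x + y) ^ d = x ^ d + y ^ d := by
    intro x y; rw [hd]; exact add_pow_char_pow x y p s
  have frobq : ∀ x y : F, (x + y) ^ q = x ^ q + y ^ q := by
    intro x y; rw [hq]; exact add_pow_char_pow x y p n
  have hsubd : ∀ x y : F, (x - y) ^ d = x ^ d - y ^ d := by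
    intro x y
    rw [sub_eq_add_neg, frobd, hdodd.neg_pow, sub_eq_add_neg]
  have hsubq : ∀ x y : F, (x - y) ^ q = x ^ q - y ^ q := by
    intro x y
    rw [sub_eq_add_neg, frobq, hqodd.neg_pow, sub_eq_add_neg]
  have fixd : ∀ x : F, x ^ q = x → (x ^ d) ^ q = x ^ d := by
    intro x h
    rw [← pow_mul, mul_comm, pow_mul, h]
  -- the odd cofactor
  obtain ⟨m, hmodd, hm⟩ : ∃ m : ℕ, Odd m ∧ (d - 1) * m = q ^ 2 - 1 := by
    have key : ∀ k : ℕ, ∃ m : ℕ, (k % 2 = m % 2) ∧ (d - 1) * m = d ^ k - 1 := by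
      intro k
      induction k with
      | zero => exact ⟨0, by simp⟩
      | succ k ih =>
        obtain ⟨m, hpar, hmk⟩ := ih
        refine ⟨m + d ^ k, ?_, ?_⟩
        · have hdk : d ^ k % 2 = 1 := Nat.odd_iff.mp (hdodd.pow)
          omega
        · have h1 : (d - 1) * (m + d ^ k) = (d - 1) * m + (d - 1) * d ^ k := by ring
          have h2 : (d - 1) * d ^ k = d ^ (k + 1) - d ^ k := by
            rw [Nat.sub_mul, one_mul, ← pow_succ']
          have h3 : 1 ≤ d ^ k := Nat.one_le_pow _ _ (by omega)
          have h4 : d ^ k ≤ d ^ (k + 1) := Nat.pow_le_pow_right (by omega) (by omega)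
          omega
    obtain ⟨m, hpar, hmk⟩ := key r
    have hq2 : q ^ 2 = d ^ r := by
      rw [hq, hd, ← pow_mul, ← pow_mul, mul_comm n 2, hr]
    have hrodd' : r % 2 = 1 := Nat.odd_iff.mp hrodd
    exact ⟨m, Nat.odd_iff.mpr (by omega), by omega⟩
  -- no (d-1)-th root of -1
  have lemA : ∀ y : F, y ^ (d - 1) ≠ -1 := by
    intro y hy
    rcases eq_or_ne y 0 with rfl | hy0
    · rw [zero_pow (show d - 1 ≠ 0 by omega)] at hy
      exact (neg_ne_zero.mpr (one_ne_zero)) hy.symm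
    · have h1 : y ^ (Fintype.card F - 1) = 1 := FiniteField.pow_card_sub_one_eq_one y hy0
      rw [hF] at h1
      have h2 : y ^ (q ^ 2 - 1) = (y ^ (d - 1)) ^ m := by rw [← pow_mul, hm]
      rw [hy, hmodd.neg_one_pow, h1] at h2
      have h3 : ((2 : ℕ) : F) = 0 := by push_cast; linear_combination h2
      have h4 : p ∣ 2 := (CharP.cast_eq_zero_iff F p 2).mp h3
      have := Nat.le_of_dvd (by norm_num) h4
      omega
  -- injectivity of z ↦ z^d + z
  have keyInj : ∀ z1 z2 : F, z1 ^ d + z1 = z2 ^ d + z2 → z1 = z2 := by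
    intro z1 z2 h
    by_contra hne
    have hx : z1 - z2 ≠ 0 := sub_ne_zero.mpr hne
    have h1 : (z1 - z2) ^ d + (z1 - z2) = 0 := by
      rw [hsubd]; linear_combination h
    have hdd : (z1 - z2) ^ d = (z1 - z2) ^ (d - 1) * (z1 - z2) := by
      rw [← pow_succ]; congr 1; omega
    have h2 : ((z1 - z2) ^ (d - 1) + 1) * (z1 - z2) = 0 := by
      rw [hdd] at h1; linear_combination h1
    rcases mul_eq_zero.mp h2 with h3 | h3
    · exact lemA (z1 - z2) (by linear_combination h3)
    · exact hx h3
  -- invertibility / permutation polynomial with coefficient u2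
  have keyB : ∀ ε x : F, ε ≠ 0 → x ^ d * ε + u2 * x * ε ^ d = 0 → x = 0 := by
    intro ε x hε hεx
    by_contra hx0
    obtain ⟨w0, hw0, hw0d⟩ := hu2pow
    have hwε : w0 * ε ≠ 0 := mul_ne_zero hw0 hε
    apply lemA (x * (w0 * ε)⁻¹)
    have hd1 : x ^ d = x ^ (d - 1) * x := by rw [← pow_succ]; congr 1; omega
    have hε1 : ε ^ d = ε ^ (d - 1) * ε := by rw [← pow_succ]; congr 1; omega
    have h6 : (x ^ (d - 1) + u2 * ε ^ (d - 1)) * (x * ε) = 0 := by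
      rw [hd1, hε1] at hεx; linear_combination hεx
    have h5 : x ^ (d - 1) = -((w0 * ε) ^ (d - 1)) := by
      rcases mul_eq_zero.mp h6 with h | h
      · rw [mul_pow, hw0d]; linear_combination h
      · exact absurd h (mul_ne_zero hx0 hε)
    rw [mul_pow, inv_pow, h5, neg_mul,
      mul_inv_cancel₀ (pow_ne_zero _ hwε)]
  -- basis decomposition
  have basisD : ∀ x y : F, x ^ q = x → y ^ q = y → x + y * μ = 0 → x = 0 ∧ y = 0 := by
    intro x y hx hy hxy
    rcases eq_or_ne y 0 with rfl | hy0
    · constructor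
      · linear_combination hxy
      · rfl
    · exfalso
      apply hμ
      have hμeq : μ = -x * y⁻¹ := by
        have h' : μ * y = -x := by linear_combination hxy
        rw [← h', mul_inv_cancel_right₀ hy0]
      rw [hμeq, mul_pow, inv_pow, hy, hqodd.neg_pow, hx]
  -- main proof
  intro v hv
  rw [hX] at hv
  obtain ⟨a, β, t1, ha, hβ, ht1, hveq⟩ := hv
  have hv1 : v.1 = (a + β * μ) ^ d + (a + β * μ) := by rw [hveq]
  have hv2 : v.2 = t1 + (a ^ d * β + a * β ^ d * u2 + β ^ (d + 1) * w2) * μ := by rw [hveq]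
  -- fixed-field closure helpers
  have fixmul : ∀ x y : F, x ^ q = x → y ^ q = y → (x * y) ^ q = x * y := by
    intro x y hx hy; rw [mul_pow, hx, hy]
  have fixadd : ∀ x y : F, x ^ q = x → y ^ q = y → (x + y) ^ q = x + y := by
    intro x y hx hy; rw [frobq, hx, hy]
  have fixsub : ∀ x y : F, x ^ q = x → y ^ q = y → (x - y) ^ q = x - y := by
    intro x y hx hy; rw [hsubq, hx, hy]
  -- the inverse of z ↦ z^d + z and the coordinate functions
  have keyInj' : Function.Injective (fun z : F => z ^ d + z) := fun z1 z2 h => keyInj z1 z2 h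
  set ψ : F → F := Function.invFun (fun z : F => z ^ d + z) with hψdef
  have hψ : ∀ z : F, ψ (z ^ d + z) = z := by
    intro z
    rw [hψdef]
    exact Function.leftInverse_invFun keyInj' z
  have hμsub : μ ^ q - μ ≠ 0 := sub_ne_zero.mpr hμ
  set f : F × F → F := fun w => ((ψ w.1) ^ q - ψ w.1) / (μ ^ q - μ) with hfdef
  set g : F × F → F := fun w => ψ w.1 - β * μ with hgdef
  have hfval : ∀ a' γ t' : F, a' ^ q = a' → γ ^ q = γ →
      f ((a' + γ * μ) ^ d + (a' + γ * μ),
        t' + (a' ^ d * γ + a' * γ ^ d * u2 + γ ^ (d + 1) * w2) * μ) = γ := by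
    intro a' γ t' ha' hγ
    rw [hfdef]
    dsimp only
    rw [hψ (a' + γ * μ), frobq, mul_pow, ha', hγ, div_eq_iff hμsub]
    ring
  have hgval : ∀ a' γ t' : F,
      g ((a' + γ * μ) ^ d + (a' + γ * μ),
        t' + (a' ^ d * γ + a' * γ ^ d * u2 + γ ^ (d + 1) * w2) * μ) = a' + γ * μ - β * μ := by
    intro a' γ t'
    rw [hgdef]
    dsimp only
    rw [hψ (a' + γ * μ)]
  -- adjacency gives the field equation
  have getE : ∀ a' γ t' : F,
      A.Adj v ((a' + γ * μ) ^ d + (a' + γ * μ),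
        t' + (a' ^ d * γ + a' * γ ^ d * u2 + γ ^ (d + 1) * w2) * μ) →
      (a + β * μ) ^ d * (a' + γ * μ) + (a + β * μ) * (a' + γ * μ) ^ d
        = (t1 + (a ^ d * β + a * β ^ d * u2 + β ^ (d + 1) * w2) * μ)
          + (t' + (a' ^ d * γ + a' * γ ^ d * u2 + γ ^ (d + 1) * w2) * μ) := by
    intro a' γ t' hadj
    rw [hA, SimpleGraph.fromRel_adj] at hadj
    obtain ⟨-, hrel | hrel⟩ := hadj
    · obtain ⟨x, y, h1, h2, h3⟩ := hrel
      dsimp only at h1 h2 h3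
      rw [hv1] at h1
      have hx := keyInj x (a + β * μ) h1
      have hy := keyInj y (a' + γ * μ) h2
      subst hx hy
      rw [hv2] at h3
      exact h3
    · obtain ⟨x, y, h1, h2, h3⟩ := hrel
      dsimp only at h1 h2 h3
      rw [hv1] at h2
      have hx := keyInj x (a' + γ * μ) h1
      have hy := keyInj y (a + β * μ) h2
      subst hx hy
      rw [hv2] at h3
      linear_combination h3
  -- the key uniqueness lemma
  have key : ∀ a1 γ t11 a2 t12 : F, a1 ^ q = a1 → a2 ^ q = a2 → γ ^ q = γ →
      t11 ^ q = t11 → t12 ^ q = t12 →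
      (γ ≠ β ∨ a1 = a2) →
      ((a + β * μ) ^ d * (a1 + γ * μ) + (a + β * μ) * (a1 + γ * μ) ^ d
        = (t1 + (a ^ d * β + a * β ^ d * u2 + β ^ (d + 1) * w2) * μ)
          + (t11 + (a1 ^ d * γ + a1 * γ ^ d * u2 + γ ^ (d + 1) * w2) * μ)) →
      ((a + β * μ) ^ d * (a2 + γ * μ) + (a + β * μ) * (a2 + γ * μ) ^ d
        = (t1 + (a ^ d * β + a * β ^ d * u2 + β ^ (d + 1) * w2) * μ)
          + (t12 + (a2 ^ d * γ + a2 * γ ^ d * u2 + γ ^ (d + 1) * w2) * μ)) →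
      a1 = a2 ∧ t11 = t12 := by
    intro a1 γ t11 a2 t12 ha1 ha2 hγ ht11 ht12 hcase E1 E2
    have hcd : (a + β * μ) ^ d = a ^ d + β ^ d * u1 + β ^ d * u2 * μ := by
      rw [frobd, mul_pow, hμd]; ring
    have hc1 : (a1 + γ * μ) ^ d = a1 ^ d + γ ^ d * u1 + γ ^ d * u2 * μ := by
      rw [frobd, mul_pow, hμd]; ring
    have hc2 : (a2 + γ * μ) ^ d = a2 ^ d + γ ^ d * u1 + γ ^ d * u2 * μ := by
      rw [frobd, mul_pow, hμd]; ring
    rw [hcd, hc1] at E1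
    rw [hcd, hc2] at E2
    have hx12 : (a1 - a2) ^ q = a1 - a2 := fixsub _ _ ha1 ha2
    have hX12 : (a1 ^ d - a2 ^ d) ^ q = a1 ^ d - a2 ^ d :=
      fixsub _ _ (fixd _ ha1) (fixd _ ha2)
    have main : (a ^ d * (a1 - a2) + β ^ d * u1 * (a1 - a2) + a * (a1 ^ d - a2 ^ d)
          - (t11 - t12))
        + (β ^ d * u2 * (a1 - a2) + β * (a1 ^ d - a2 ^ d) - (a1 ^ d - a2 ^ d) * γ
            - (a1 - a2) * γ ^ d * u2) * μ = 0 := by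
      linear_combination E1 - E2
    have fix1 : (a ^ d * (a1 - a2) + β ^ d * u1 * (a1 - a2) + a * (a1 ^ d - a2 ^ d)
        - (t11 - t12)) ^ q
        = a ^ d * (a1 - a2) + β ^ d * u1 * (a1 - a2) + a * (a1 ^ d - a2 ^ d)
          - (t11 - t12) :=
      fixsub _ _ (fixadd _ _ (fixadd _ _ (fixmul _ _ (fixd _ ha) hx12)
        (fixmul _ _ (fixmul _ _ (fixd _ hβ) hu1) hx12)) (fixmul _ _ ha hX12))
        (fixsub _ _ ht11 ht12)
    have fix2 : (β ^ d * u2 * (a1 - a2) + β * (a1 ^ d - a2 ^ d) - (a1 ^ d - a2 ^ d) * γ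
        - (a1 - a2) * γ ^ d * u2) ^ q
        = β ^ d * u2 * (a1 - a2) + β * (a1 ^ d - a2 ^ d) - (a1 ^ d - a2 ^ d) * γ
          - (a1 - a2) * γ ^ d * u2 :=
      fixsub _ _ (fixsub _ _ (fixadd _ _ (fixmul _ _ (fixmul _ _ (fixd _ hβ) hu2) hx12)
        (fixmul _ _ hβ hX12)) (fixmul _ _ hX12 hγ))
        (fixmul _ _ (fixmul _ _ hx12 (fixd _ hγ)) hu2)
    obtain ⟨hb1, hb2⟩ := basisD _ _ fix1 fix2 main
    have ha12 : a1 = a2 := by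
      rcases hcase with hγβ | h
      · have hε : β - γ ≠ 0 := sub_ne_zero.mpr (Ne.symm hγβ)
        have hkb : (a1 - a2) ^ d * (β - γ) + u2 * (a1 - a2) * (β - γ) ^ d = 0 := by
          rw [hsubd a1 a2, hsubd β γ]
          linear_combination hb2
        exact sub_eq_zero.mp (keyB _ _ hε hkb)
      · exact h
    subst ha12
    exact ⟨rfl, by linear_combination -hb1⟩
  -- counting
  set T2 : Set F := {y : F | y ^ q = y} with hT2def
  have hT2fin : T2.Finite := Set.toFinite _
  have hT2card : T2.ncard ≤ q := by
    have hdegX : (Polynomial.X : Polynomial F).natDegree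
        < ((Polynomial.X : Polynomial F) ^ q).natDegree := by
      rw [Polynomial.natDegree_X_pow, Polynomial.natDegree_X]; omega
    have hdeg : ((Polynomial.X : Polynomial F) ^ q - Polynomial.X).natDegree = q := by
      rw [Polynomial.natDegree_sub_eq_left_of_natDegree_lt hdegX, Polynomial.natDegree_X_pow]
    have hP0 : ((Polynomial.X : Polynomial F) ^ q - Polynomial.X) ≠ 0 := by
      intro h
      rw [h, Polynomial.natDegree_zero] at hdeg
      omega
    classical
    have hsub : T2.toFinset ⊆
        ((Polynomial.X : Polynomial F) ^ q - Polynomial.X).roots.toFinset := by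
      intro y hy
      rw [Set.mem_toFinset, hT2def, Set.mem_setOf_eq] at hy
      rw [Multiset.mem_toFinset, Polynomial.mem_roots hP0]
      simp [Polynomial.IsRoot, sub_eq_zero, hy]
    have h1 := Finset.card_le_card hsub
    have h2 := Multiset.toFinset_card_le ((Polynomial.X : Polynomial F) ^ q - Polynomial.X).roots
    have h3 := Polynomial.card_roots' ((Polynomial.X : Polynomial F) ^ q - Polynomial.X)
    rw [Set.ncard_eq_toFinset_card' T2]
    omega
  have hβT2 : β ∈ T2 := hβ
  have hT1card : (T2 \ {β}).ncard ≤ q - 1 := by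
    have h1 : (insert β (T2 \ {β})).ncard = (T2 \ {β}).ncard + 1 :=
      Set.ncard_insert_of_notMem (by simp) hT2fin.diff
    rw [Set.insert_diff_singleton, Set.insert_eq_of_mem hβT2] at h1
    omega
  -- split the neighbour set
  have hNsub : {w ∈ X | A.Adj v w} ⊆
      ({w ∈ X | A.Adj v w} ∩ {w | f w ≠ β}) ∪ ({w ∈ X | A.Adj v w} ∩ {w | f w = β}) := by
    intro w hw
    by_cases hfw : f w = β
    · exact Or.inr ⟨hw, hfw⟩
    · exact Or.inl ⟨hw, hfw⟩
  have hmaps1 : ∀ w ∈ ({w ∈ X | A.Adj v w} ∩ {w | f w ≠ β}), f w ∈ T2 \ {β} := by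
    intro w hw
    obtain ⟨⟨hwX, hwAdj⟩, hfw⟩ := hw
    rw [hX] at hwX
    obtain ⟨a1, γ1, t11, ha1, hγ1, ht11, rfl⟩ := hwX
    simp only [Set.mem_setOf_eq] at hfw
    rw [hfval a1 γ1 t11 ha1 hγ1] at hfw ⊢
    exact ⟨hγ1, by simpa using hfw⟩
  have hinj1 : Set.InjOn f ({w ∈ X | A.Adj v w} ∩ {w | f w ≠ β}) := by
    intro w hw w' hw' hff
    obtain ⟨⟨hwX, hwAdj⟩, hfw⟩ := hw
    obtain ⟨⟨hwX', hwAdj'⟩, hfw'⟩ := hw'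
    rw [hX] at hwX hwX'
    obtain ⟨a1, γ1, t11, ha1, hγ1, ht11, rfl⟩ := hwX
    obtain ⟨a2, γ2, t12, ha2, hγ2, ht12, rfl⟩ := hwX'
    simp only [Set.mem_setOf_eq] at hfw hfw'
    rw [hfval a1 γ1 t11 ha1 hγ1, hfval a2 γ2 t12 ha2 hγ2] at hff
    subst hff
    rw [hfval a1 γ1 t11 ha1 hγ1] at hfw
    have E1 := getE a1 γ1 t11 hwAdj
    have E2 := getE a2 γ1 t12 hwAdj'
    obtain ⟨h12, ht⟩ := key a1 γ1 t11 a2 t12 ha1 ha2 hγ1 ht11 ht12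
      (Or.inl (by simpa using hfw)) E1 E2
    rw [h12, ht]
  have hmaps2 : ∀ w ∈ ({w ∈ X | A.Adj v w} ∩ {w | f w = β}), g w ∈ T2 := by
    intro w hw
    obtain ⟨⟨hwX, hwAdj⟩, hfw⟩ := hw
    rw [hX] at hwX
    obtain ⟨a1, γ1, t11, ha1, hγ1, ht11, rfl⟩ := hwX
    simp only [Set.mem_setOf_eq] at hfw
    rw [hfval a1 γ1 t11 ha1 hγ1] at hfw
    rw [hgval a1 γ1 t11, hfw]
    simpa [hT2def] using ha1
  have hinj2 : Set.InjOn g ({w ∈ X | A.Adj v w} ∩ {w | f w = β}) := by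
    intro w hw w' hw' hgg
    obtain ⟨⟨hwX, hwAdj⟩, hfw⟩ := hw
    obtain ⟨⟨hwX', hwAdj'⟩, hfw'⟩ := hw'
    rw [hX] at hwX hwX'
    obtain ⟨a1, γ1, t11, ha1, hγ1, ht11, rfl⟩ := hwX
    obtain ⟨a2, γ2, t12, ha2, hγ2, ht12, rfl⟩ := hwX'
    simp only [Set.mem_setOf_eq] at hfw hfw'
    rw [hfval a1 γ1 t11 ha1 hγ1] at hfw
    rw [hfval a2 γ2 t12 ha2 hγ2] at hfw'
    rw [hgval a1 γ1 t11, hgval a2 γ2 t12, hfw, hfw'] at hgg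
    have h12 : a1 = a2 := by linear_combination hgg
    have E1 := getE a1 γ1 t11 hwAdj
    have E2 := getE a2 γ2 t12 hwAdj'
    rw [hfw, h12] at E1
    rw [hfw'] at E2
    obtain ⟨-, ht⟩ := key a2 β t11 a2 t12 ha2 ha2 hβ ht11 ht12 (Or.inr rfl) E1 E2
    rw [hfw, hfw', h12, ht]
  have hcard1 : ({w ∈ X | A.Adj v w} ∩ {w | f w ≠ β}).ncard ≤ q - 1 :=
    le_trans (Set.ncard_le_ncard_of_injOn f hmaps1 hinj1 hT2fin.diff) hT1card
  have hcard2 : ({w ∈ X | A.Adj v w} ∩ {w | f w = β}).ncard ≤ q :=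
    le_trans (Set.ncard_le_ncard_of_injOn g hmaps2 hinj2 hT2fin) hT2card
  calc {w ∈ X | A.Adj v w}.ncard
      ≤ (({w ∈ X | A.Adj v w} ∩ {w | f w ≠ β})
          ∪ ({w ∈ X | A.Adj v w} ∩ {w | f w = β})).ncard :=
        Set.ncard_le_ncard hNsub (Set.toFinite _)
    _ ≤ ({w ∈ X | A.Adj v w} ∩ {w | f w ≠ β}).ncard
          + ({w ∈ X | A.Adj v w} ∩ {w | f w = β}).ncard := Set.ncard_union_le _ _
    _ ≤ (q - 1) + q := Nat.add_le_add hcard1 hcard2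
    _ ≤ 2 * q - 1 := by omega
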